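/- Fix n-independent constants τ, ω₁ > 0, and pick any η ∈ ℝ with |η| > 0, any 0 < T ≤ n^{−ω₁}, and any z ∈ ℂ with |z| ≤ 1 − τ. Then there exist initial data η₀ ∈ ℝ, z₀ ∈ ℂ with T*(z₀, η₀) ≥ T such that the solution (η_t, z_t) of the characteristic flow with this initial data satisfies η_T = η and z_T = z. Moreover |η₀| ≳ T and |z₀| ≤ 1 − τ/2. -/

import Mathlib

open MeasureTheory ProbabilityTheory Matrix Filter Finset
open scoped Real ComplexConjugate Matrix.Norms.L2Operator

noncomputable section

namespace RMT

/-- The space of `2n × 2n` complex matrices written in `2 × 2` block form. -/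
abbrev Mat (n : ℕ) := Matrix (Fin n ⊕ Fin n) (Fin n ⊕ Fin n) ℂ

/-- Normalized trace `⟨A⟩`. -/
def avgTr {m : Type*} [Fintype m] (A : Matrix m m ℂ) : ℂ :=
  (Fintype.card m : ℂ)⁻¹ * A.trace

/-- The matrix `E₋ = E₁ - E₂`. -/
def Eminus (n : ℕ) : Mat n := Matrix.fromBlocks 1 0 0 (-1)

/-- The covariance operator `S[R] = ⟨R⟩·1 - ⟨R E₋⟩·E₋`, as a linear endomorphism. -/
def covS (n : ℕ) : Mat n →ₗ[ℂ] Mat n where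
  toFun R := avgTr R • (1 : Mat n) - avgTr (R * Eminus n) • Eminus n
  map_add' R S := by
    simp only [avgTr, Matrix.add_mul, Matrix.trace_add, mul_add, add_smul]
    abel
  map_smul' c R := by
    simp only [avgTr, Matrix.smul_mul, Matrix.trace_smul, smul_eq_mul, RingHom.id_apply,
      smul_sub, smul_smul]
    congr 1 <;> · congr 1; ring

/-- The stability operator `B₁₂ = 1 - M₁ S[·] M₂`. -/
def stabEnd {n : ℕ} (M1 M2 : Mat n) : Module.End ℂ (Mat n) :=
  LinearMap.id - ((LinearMap.mulRight ℂ M2).comp ((LinearMap.mulLeft ℂ M1).comp (covS n)))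

/-- The adjoint (w.r.t. the Hilbert–Schmidt inner product) of the stability operator,
`B₁₂*[K] = K - S[M₁* K M₂*]`. -/
def adjStab {n : ℕ} (M1 M2 : Mat n) : Module.End ℂ (Mat n) :=
  LinearMap.id - ((covS n).comp ((LinearMap.mulRight ℂ M2ᴴ).comp (LinearMap.mulLeft ℂ M1ᴴ)))

/-- `M₁₂^A := B₁₂⁻¹[M₁ A M₂]`. -/
def M12 {n : ℕ} (M1 M2 A : Mat n) : Mat n := Ring.inverse (stabEnd M1 M2) (M1 * A * M2)

/-- `m` is the solution of the scalar Dyson equation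
`-1/m = iη + m - |z|²/(iη + m)` with side condition `Im m · η > 0`. -/
def IsMsc (msc : ℂ → ℝ → ℂ) : Prop :=
  ∀ (z : ℂ) (η : ℝ), η ≠ 0 →
    (-(msc z η)⁻¹ = Complex.I * η + msc z η
        - (Complex.normSq z : ℂ) / (Complex.I * η + msc z η)
      ∧ 0 < (msc z η).im * η)

/-- `u^z(iη) = iη / (iη + m^z(iη))`. -/
def usc (msc : ℂ → ℝ → ℂ) (z : ℂ) (η : ℝ) : ℂ :=
  (Complex.I * η) / (Complex.I * η + msc z η)

/-- The deterministic approximation `M^z(iη)` of the resolvent. -/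
def Mblock (msc : ℂ → ℝ → ℂ) (n : ℕ) (z : ℂ) (η : ℝ) : Mat n :=
  Matrix.fromBlocks ((msc z η) • 1) ((-(z * usc msc z η)) • 1)
    ((-((starRingEnd ℂ z) * usc msc z η)) • 1) ((msc z η) • 1)

/-- `M₁₂^A` at spectral parameters `(z₁, iη₁, z₂, iη₂)`. -/
def M12A (msc : ℂ → ℝ → ℂ) (n : ℕ) (z1 : ℂ) (η1 : ℝ) (z2 : ℂ) (η2 : ℝ) (A : Mat n) : Mat n :=
  M12 (Mblock msc n z1 η1) (Mblock msc n z2 η2) A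

/-- Hermitisation of a general (not necessarily square-symmetric) matrix. -/
def herm {n : ℕ} (X : Matrix (Fin n) (Fin n) ℂ) : Mat n := Matrix.fromBlocks 0 X Xᴴ 0

/-- Hermitisation `H^z` of `X - z`. -/
def Hz {n : ℕ} (X : Matrix (Fin n) (Fin n) ℂ) (z : ℂ) : Mat n :=
  herm (X - z • (1 : Matrix (Fin n) (Fin n) ℂ))

/-- Resolvent `G^z(iη) = (H^z - iη)⁻¹`. -/
def Gz {n : ℕ} (X : Matrix (Fin n) (Fin n) ℂ) (z : ℂ) (η : ℝ) : Mat n :=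
  (Hz X z - (Complex.I * η) • 1)⁻¹

/-- The generalized spectral parameter `Λ`. -/
def Lam (n : ℕ) (z : ℂ) (η : ℝ) : Mat n :=
  Matrix.fromBlocks ((Complex.I * η) • 1) (z • 1)
    ((starRingEnd ℂ z) • 1) ((Complex.I * η) • 1)

variable {Ω : Type*} [MeasureSpace Ω]

/-- Moment assumptions on the entry distribution `χ`. -/
structure EntryMoments (χ : Ω → ℂ) : Prop where
  meas : Measurable χ
  mean_zero : ∫ ω, χ ω = 0
  sq_zero : ∫ ω, (χ ω) ^ 2 = 0
  var_one : ∫ ω, ‖χ ω‖ ^ 2 = 1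
  moment_bound : ∀ p : ℕ, ∃ C : ℝ, ∫ ω, ‖χ ω‖ ^ p ≤ C

/-- `X` is an `n × n` i.i.d. random matrix with entries distributed as `n^{-1/2} χ`. -/
structure IsIIDMatrix (χ : Ω → ℂ) (n : ℕ) (X : Ω → Matrix (Fin n) (Fin n) ℂ) : Prop where
  meas : ∀ a b, Measurable fun ω => X ω a b
  indep : iIndepFun (m := fun _ : Fin n × Fin n => (inferInstance : MeasurableSpace ℂ))
    (fun p ω => X ω p.1 p.2) volume
  law : ∀ a b, Measure.map (fun ω => X ω a b) volume
    = Measure.map (fun ω => ((Real.sqrt n : ℝ) : ℂ)⁻¹ * χ ω) volume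

/-- The standard complex Gaussian law (mean `0`, `E|χ|² = 1`, `Eχ² = 0`). -/
def complexGaussian : Measure ℂ :=
  ((gaussianReal 0 (1/2)).prod (gaussianReal 0 (1/2))).map fun p => (p.1 : ℂ) + p.2 * Complex.I

/-- `X` is i.i.d. and `Γ` is a standard complex Ginibre matrix, with all entries of `X` and `Γ`
jointly independent. -/
structure IIDPlusGinibre (χ : Ω → ℂ) (n : ℕ) (X Γ : Ω → Matrix (Fin n) (Fin n) ℂ) : Prop where
  iid : IsIIDMatrix χ n X
  measG : ∀ a b, Measurable fun ω => Γ ω a b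
  lawG : ∀ a b, Measure.map (fun ω => Γ ω a b) volume = complexGaussian
  indepAll : iIndepFun
    (m := fun _ : (Fin n × Fin n) ⊕ (Fin n × Fin n) => (inferInstance : MeasurableSpace ℂ))
    (Sum.elim (fun p ω => X ω p.1 p.2) (fun p ω => Γ ω p.1 p.2)) volume

/-- The Ornstein–Uhlenbeck flow `dX_t = -½X_t dt + n^{-1/2} dB_t` started from `X`, realized
through its strong solution `X_t = e^{-t/2}(X + √((e^t-1)/n)·Γ)` with a Ginibre matrix `Γ`. -/
def ouFlow {n : ℕ} (X Γ : Ω → Matrix (Fin n) (Fin n) ℂ) (t : ℝ) (ω : Ω) :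
    Matrix (Fin n) (Fin n) ℂ :=
  ((Real.exp (-t / 2) : ℝ) : ℂ) •
    (X ω + ((Real.sqrt ((Real.exp t - 1) / n) : ℝ) : ℂ) • Γ ω)

/-- Laplacian of a test function on `ℂ ≅ ℝ²`. -/
def lap (f : ℂ → ℂ) (z : ℂ) : ℂ :=
  fderiv ℝ (fun w => fderiv ℝ f w 1) z 1 + fderiv ℝ (fun w => fderiv ℝ f w Complex.I) z Complex.I

/-- `|∇f|²`. -/
def gradSq (f : ℂ → ℂ) (z : ℂ) : ℝ :=
  ‖fderiv ℝ f z 1‖ ^ 2 + ‖fderiv ℝ f z Complex.I‖ ^ 2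

/-- `⟨∇g, ∇f⟩_{L²}`. -/
def gradInner (g f : ℂ → ℂ) : ℂ :=
  ∫ z : ℂ, ((starRingEnd ℂ) (fderiv ℝ g z 1) * fderiv ℝ f z 1
    + (starRingEnd ℂ) (fderiv ℝ g z Complex.I) * fderiv ℝ f z Complex.I)

/-- The mesoscopically rescaled test function `f_{z₀,a}(z) = f(nᵃ(z - z₀))`. -/
def resc (f : ℂ → ℂ) (z0 : ℂ) (a : ℝ) (n : ℕ) (z : ℂ) : ℂ :=
  f ((((n : ℝ) ^ a : ℝ) : ℂ) * (z - z0))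

/-- Linear eigenvalue statistic `∑ᵢ g(σᵢ)`, the `σᵢ` being the roots of the characteristic
polynomial (with multiplicity). -/
def eigSum {n : ℕ} (X : Matrix (Fin n) (Fin n) ℂ) (g : ℂ → ℂ) : ℂ :=
  ((X.charpoly.roots).map g).sum

/-- Centered linear statistic `L_n(g)`. -/
def Ln {n : ℕ} (X : Ω → Matrix (Fin n) (Fin n) ℂ) (g : ℂ → ℂ) (ω : Ω) : ℂ :=
  eigSum (X ω) g - ∫ ω', eigSum (X ω') g

/-- `V_{i,j}` from the resolvent CLT. -/
def Vfun (msc : ℂ → ℝ → ℂ) (z1 z2 : ℂ) (η1 η2 : ℝ) : ℂ :=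
  (1 / 2 : ℂ) * deriv (fun s : ℝ => deriv (fun t : ℝ =>
    Complex.log (1
      + (usc msc z1 s * usc msc z2 t * (‖z1‖ : ℂ) * (‖z2‖ : ℂ)) ^ 2
      - (msc z1 s) ^ 2 * (msc z2 t) ^ 2
      - 2 * usc msc z1 s * usc msc z2 t * ((z1 * (starRingEnd ℂ) z2).re : ℂ))) η2) η1

/-- `U_i` from the resolvent CLT. -/
def Ufun (msc : ℂ → ℝ → ℂ) (z : ℂ) (η : ℝ) : ℂ :=
  (Complex.I / (Real.sqrt 2 : ℂ)) * deriv (fun t : ℝ => (msc z t) ^ 2) η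

/-- A pairing of `[p]`, encoded as a fixed-point-free involution. -/
def IsPairing {p : ℕ} (f : Fin p → Fin p) : Prop :=
  Function.Involutive f ∧ ∀ i, f i ≠ i

open scoped Classical in
/-- `∑_{P ∈ Π_p} ∏_{{i,j} ∈ P} F i j`. -/
def pairingSum (p : ℕ) (F : Fin p → Fin p → ℂ) : ℂ :=
  ∑ f : Fin p → Fin p, if IsPairing f then
    ∏ i ∈ Finset.univ.filter fun i => i < f i, F i (f i) else 0

/-- A measure on `ℂ` is a centered complex Gaussian law iff it is the image of the standard
two-dimensional real Gaussian under a real-linear map `ℝ² → ℂ`. -/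
def IsCenteredComplexGaussian (μ : Measure ℂ) : Prop :=
  ∃ a b : ℂ, μ = Measure.map (fun p : ℝ × ℝ => a * p.1 + b * p.2)
    ((gaussianReal 0 1).prod (gaussianReal 0 1))

/-- `Im` of a matrix: `(A - A*)/(2i)`. -/
def imPart {n : ℕ} (A : Mat n) : Mat n := (2 * Complex.I)⁻¹ • (A - Aᴴ)

end RMT

private lemma uniq_root {η s v1 v2 : ℝ} (hη : 0 < η) (hs : 0 ≤ s)
    (hv1 : 0 < v1) (hv2 : 0 < v2)
    (h1 : η + v1 = v1 * (η + v1)^2 + s * v1)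
    (h2 : η + v2 = v2 * (η + v2)^2 + s * v2) : v1 = v2 := by
  have key : (v1 - v2) * (η + v1*v2*((η+v1)+(η+v2))) = 0 := by
    linear_combination v1 * h2 - v2 * h1
  have hpos : 0 < η + v1*v2*((η+v1)+(η+v2)) := by positivity
  rcases mul_eq_zero.mp key with h | h
  · linarith
  · linarith

private lemma dyson_real {m z : ℂ} {η : ℝ} (hη : η ≠ 0)
    (heq : -(m)⁻¹ = Complex.I * η + m - (Complex.normSq z : ℂ) / (Complex.I * η + m))
    (hsign : 0 < m.im * η) :
    η + m.im = m.im * (η + m.im)^2 + Complex.normSq z * m.im := by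
  set s := Complex.normSq z with hsdef
  have hs : 0 ≤ s := Complex.normSq_nonneg z
  have hv0 : m.im ≠ 0 := by
    intro h; rw [h] at hsign; simp at hsign
  have hm0 : m ≠ 0 := fun h => hv0 (by simp [h])
  have hwim : (Complex.I * η + m).im = η + m.im := by simp
  have huv : η + m.im ≠ 0 := by
    rcases hη.lt_or_gt with h | h
    · nlinarith
    · nlinarith
  have hw0 : Complex.I * η + m ≠ 0 := fun h => huv (by rw [← hwim, h]; simp)
  have hpoly : m * (Complex.I * η + m)^2 - (s : ℂ) * m + (Complex.I * η + m) = 0 := by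
    field_simp at heq
    linear_combination -heq
  rw [Complex.ext_iff] at hpoly
  obtain ⟨hre, him⟩ := hpoly
  simp [pow_two, Complex.mul_re, Complex.mul_im] at hre him
  have hfac : m.re * (m.re^2 + 1 - (η + m.im)^2 - 2*m.im*(η + m.im) - s) = 0 := by
    linear_combination hre
  have ha : m.re = 0 := by
    rcases mul_eq_zero.mp hfac with ha | hK
    · exact ha
    · exfalso
      have hE : 2*m.im^2*(η + m.im) + 2*(η + m.im)*m.re^2 + (η + m.im) - m.im = 0 := by
        linear_combination him - m.im * hK
      rcases hη.lt_or_gt with h | h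
      · have hv : m.im < 0 := by nlinarith
        have hu : η + m.im < 0 := by linarith
        nlinarith [mul_pos (mul_pos (neg_pos.mpr hv) (neg_pos.mpr hv)) (neg_pos.mpr hu),
          mul_nonneg (neg_pos.mpr hu).le (sq_nonneg m.re)]
      · have hv : 0 < m.im := by nlinarith
        have hu : 0 < η + m.im := by linarith
        nlinarith [mul_pos (mul_pos hv hv) hu, mul_nonneg hu.le (sq_nonneg m.re)]
  rw [ha] at him
  ring_nf at him ⊢
  linear_combination him

private lemma msc_im {msc : ℂ → ℝ → ℂ} (hmsc : RMT.IsMsc msc) (z : ℂ) (η : ℝ) (hη : η ≠ 0) :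
    0 < (msc z η).im * η ∧
      η + (msc z η).im = (msc z η).im * (η + (msc z η).im)^2
        + Complex.normSq z * (msc z η).im := by
  obtain ⟨heq, hsign⟩ := hmsc z η hη
  exact ⟨hsign, dyson_real hη heq hsign⟩

private lemma msc_im_odd {msc : ℂ → ℝ → ℂ} (hmsc : RMT.IsMsc msc) (z : ℂ) {η : ℝ}
    (hη : 0 < η) : (msc z (-η)).im = -(msc z η).im := by
  obtain ⟨hs1, he1⟩ := msc_im hmsc z η hη.ne'
  obtain ⟨hs2, he2⟩ := msc_im hmsc z (-η) (by simpa using hη.ne')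
  have hv1 : 0 < (msc z η).im := by nlinarith
  have hv2 : (msc z (-η)).im < 0 := by nlinarith
  have := uniq_root hη (Complex.normSq_nonneg z) hv1
    (show 0 < -(msc z (-η)).im by linarith) he1 (by linear_combination -he2)
  linarith

private lemma eta0_bound {τ η T v s : ℝ} (hτ : 0 < τ) (hη : 0 < η) (hT : 0 < T)
    (hT1 : T ≤ 1) (hτ1 : τ ≤ 1) (hs : 0 ≤ s) (hsle : s ≤ (1 - τ)^2) (hv : 0 < v)
    (heq : η + v = v * (η + v)^2 + s * v) : min 1 (τ/4) * T ≤ η + v * (T/2) := by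
  rcases le_or_gt 1 η with hc | hc
  · have h1 : min 1 (τ/4) * T ≤ 1 * T := mul_le_mul_of_nonneg_right (min_le_left _ _) hT.le
    nlinarith [mul_pos hv hT]
  · have hu : 0 < η + v := by linarith
    have h6 : (η + v) * (1 - v * (η + v)) = s * v := by linear_combination heq
    have h5 : v * (η + v) ≤ 1 := by nlinarith [mul_nonneg hs hv.le]
    have hv1 : v ≤ 1 := by nlinarith
    have h7 : 1 - v * (η + v) ≤ s := by nlinarith [mul_nonneg hs hη.le]
    have h8 : τ/2 ≤ v := by nlinarith
    have h9 : min 1 (τ/4) * T ≤ (τ/4) * T := mul_le_mul_of_nonneg_right (min_le_right _ _) hT.le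
    nlinarith

private lemma main_pos {msc : ℂ → ℝ → ℂ} (hmsc : RMT.IsMsc msc) {τ η T : ℝ} {z : ℂ}
    (hτ : 0 < τ) (hη : 0 < η) (hz : ‖z‖ ≤ 1 - τ) (hT : 0 < T) (hT1 : T ≤ 1)
    (hTτ : Real.exp (T / 2) ≤ 1 + τ / 2) :
    ∃ (η0 : ℝ) (z0 : ℂ) (ηf : ℝ → ℝ) (zf : ℝ → ℂ),
      ηf 0 = η0 ∧ zf 0 = z0 ∧ η0 ≠ 0 ∧
      (∀ t ∈ Set.Icc (0 : ℝ) T,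
        HasDerivAt ηf (-(msc (zf t) (ηf t)).im - ηf t / 2) t ∧
        HasDerivAt zf (-(zf t) / 2) t) ∧
      (∀ t ∈ Set.Icc (0 : ℝ) T, 0 < ηf t * η0) ∧
      ηf T = η ∧ zf T = z ∧
      min 1 (τ / 4) * T ≤ |η0| ∧ ‖z0‖ ≤ 1 - τ / 2 := by
  obtain ⟨hsgn, heq⟩ := msc_im hmsc z η hη.ne'
  set v := (msc z η).im with hvdef
  have hs : 0 ≤ Complex.normSq z := Complex.normSq_nonneg z
  have hv : 0 < v := by nlinarith
  set ηf : ℝ → ℝ :=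
    fun t => (η + v) * Real.exp ((T - t) / 2) - v * Real.exp (-((T - t) / 2)) with hηf
  set zf : ℝ → ℂ := fun t => (Real.exp ((T - t) / 2) : ℂ) * z with hzf
  have hrpos : ∀ t : ℝ, 0 < Real.exp ((T - t) / 2) := fun t => Real.exp_pos _
  have hmono : ∀ t ∈ Set.Icc (0:ℝ) T, η ≤ ηf t := by
    intro t ht
    have h1 : 1 ≤ Real.exp ((T - t) / 2) := Real.one_le_exp (by linarith [ht.2])
    have h2 : Real.exp (-((T - t) / 2)) ≤ 1 := by
      rw [Real.exp_le_one_iff]; linarith [ht.2]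
    simp only [hηf]
    nlinarith
  have hηfpos : ∀ t ∈ Set.Icc (0:ℝ) T, 0 < ηf t :=
    fun t ht => lt_of_lt_of_le hη (hmono t ht)
  have hηfT : ηf T = η := by simp [hηf]
  have hzfT : zf T = z := by simp [hzf]
  have key : ∀ t ∈ Set.Icc (0:ℝ) T,
      (msc (zf t) (ηf t)).im = v * Real.exp (-((T - t) / 2)) := by
    intro t ht
    have hηt : 0 < ηf t := hηfpos t ht
    obtain ⟨hs', he'⟩ := msc_im hmsc (zf t) (ηf t) hηt.ne'
    have hv1 : 0 < (msc (zf t) (ηf t)).im := by nlinarith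
    have hv2 : 0 < v * Real.exp (-((T - t) / 2)) := by positivity
    refine uniq_root hηt (Complex.normSq_nonneg (zf t)) hv1 hv2 he' ?_
    have hns : Complex.normSq (zf t) = Real.exp ((T - t) / 2) ^ 2 * Complex.normSq z := by
      simp only [hzf, Complex.normSq_mul, Complex.normSq_ofReal]; ring
    have hrr : Real.exp ((T - t) / 2) * Real.exp (-((T - t) / 2)) = 1 := by
      rw [← Real.exp_add]; simp
    rw [hns]
    simp only [hηf]
    set r := Real.exp ((T - t) / 2) with hr
    set q := Real.exp (-((T - t) / 2)) with hqdef
    linear_combination r * heq - (v*(η+v)^2*r + Complex.normSq z*v*r) * hrr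
  refine ⟨ηf 0, zf 0, ηf, zf, rfl, rfl, (hηfpos 0 ⟨le_rfl, hT.le⟩).ne', ?_, ?_, hηfT, hzfT, ?_, ?_⟩
  · -- derivatives
    intro t ht
    constructor
    · have h1 : HasDerivAt (fun t : ℝ => (T - t) / 2) (-1 / 2 : ℝ) t :=
        ((hasDerivAt_id t).const_sub T).div_const 2
      have h2 := h1.exp
      have h3 := h1.neg.exp
      have hd := (h2.const_mul (η + v)).sub (h3.const_mul v)
      have hval : (η + v) * (Real.exp ((T - t) / 2) * (-1 / 2))
          - v * (Real.exp (-((T - t) / 2)) * -(-1 / 2))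
          = -(msc (zf t) (ηf t)).im - ηf t / 2 := by
        rw [key t ht]
        simp only [hηf]
        ring
      rw [← hval]
      exact hd
    · have h1 : HasDerivAt (fun t : ℝ => (T - t) / 2) (-1 / 2 : ℝ) t :=
        ((hasDerivAt_id t).const_sub T).div_const 2
      have h2 := (h1.exp.ofReal_comp).mul_const z
      have hval : (((Real.exp ((T - t) / 2) * (-1 / 2) : ℝ)) : ℂ) * z = -(zf t) / 2 := by
        simp only [hzf]
        push_cast
        ring
      rw [← hval]
      exact h2
  · intro t ht
    exact mul_pos (hηfpos t ht) (hηfpos 0 ⟨le_rfl, hT.le⟩)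
  · -- lower bound on |η0|
    have h0pos : 0 < ηf 0 := hηfpos 0 ⟨le_rfl, hT.le⟩
    rw [abs_of_pos h0pos]
    have hR : T/2 + 1 ≤ Real.exp ((T - 0) / 2) := by
      have := Real.add_one_le_exp (T/2)
      simpa using this
    have hq1 : Real.exp (-((T - 0) / 2)) ≤ 1 := by
      rw [Real.exp_le_one_iff]; linarith
    have hlow : η + v * (T/2) ≤ ηf 0 := by
      simp only [hηf]
      nlinarith
    have hτ1 : τ ≤ 1 := by
      have := norm_nonneg z; linarith
    have hsle : Complex.normSq z ≤ (1 - τ)^2 := by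
      rw [← Complex.sq_norm]
      exact pow_le_pow_left₀ (norm_nonneg z) hz 2
    have hb := eta0_bound hτ hη hT hT1 hτ1 hs hsle hv heq
    linarith
  · -- |z0| bound
    have habs : ‖zf 0‖ = Real.exp ((T - 0) / 2) * ‖z‖ := by
      simp only [hzf, norm_mul, Complex.norm_real, Real.norm_eq_abs]
      rw [abs_of_pos (hrpos 0)]
    rw [habs]
    have hzn : 0 ≤ ‖z‖ := norm_nonneg z
    have h1τ : 0 ≤ 1 - τ := by linarith
    have hE : Real.exp ((T - 0) / 2) ≤ 1 + τ/2 := by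
      have : (T - 0)/2 = T/2 := by ring
      rw [this]; exact hTτ
    have h2 : Real.exp ((T - 0) / 2) * ‖z‖ ≤ (1 + τ/2) * (1 - τ) :=
      mul_le_mul hE hz hzn (by linarith)
    nlinarith


open RMT in
/-- existence of initial data for the characteristic flow reaching a prescribed
target `(η, z)` after a prescribed short time `T ≤ n^{-ω₁}`. -/
theorem statement10 (τ ω₁ : ℝ) (hτ : 0 < τ) (hω₁ : 0 < ω₁)
    (msc : ℂ → ℝ → ℂ) (hmsc : IsMsc msc) :
    ∃ c > 0, ∃ N : ℕ, ∀ n : ℕ, N ≤ n →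
      ∀ (η : ℝ) (z : ℂ) (T : ℝ), η ≠ 0 → ‖z‖ ≤ 1 - τ →
        0 < T → T ≤ (n : ℝ) ^ (-ω₁) →
        ∃ (η0 : ℝ) (z0 : ℂ) (ηf : ℝ → ℝ) (zf : ℝ → ℂ),
          ηf 0 = η0 ∧ zf 0 = z0 ∧ η0 ≠ 0 ∧
          (∀ t ∈ Set.Icc (0 : ℝ) T,
            HasDerivAt ηf (-(msc (zf t) (ηf t)).im - ηf t / 2) t ∧
            HasDerivAt zf (-(zf t) / 2) t) ∧
          (∀ t ∈ Set.Icc (0 : ℝ) T, 0 < ηf t * η0) ∧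
          ηf T = η ∧ zf T = z ∧
          c * T ≤ |η0| ∧ ‖z0‖ ≤ 1 - τ / 2 := by
  have hlog : 0 < Real.log (1 + τ/2) := Real.log_pos (by linarith)
  set ε : ℝ := min 1 (2 * Real.log (1 + τ/2)) with hεdef
  have hε : 0 < ε := lt_min one_pos (by linarith)
  have htend : Filter.Tendsto (fun n : ℕ => (n : ℝ) ^ (-ω₁)) Filter.atTop (nhds 0) :=
    (tendsto_rpow_neg_atTop hω₁).comp tendsto_natCast_atTop_atTop
  have hev : ∀ᶠ n : ℕ in Filter.atTop, (n : ℝ) ^ (-ω₁) < ε :=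
    htend.eventually_lt_const hε
  obtain ⟨N, hN⟩ := Filter.eventually_atTop.mp hev
  refine ⟨min 1 (τ/4), lt_min one_pos (by linarith), N, ?_⟩
  intro n hn η z T hη hz hT hTn
  have hTε : T ≤ ε := le_trans hTn (hN n hn).le
  have hT1 : T ≤ 1 := le_trans hTε (min_le_left _ _)
  have hTτ : Real.exp (T / 2) ≤ 1 + τ / 2 := by
    have h1 : T / 2 ≤ Real.log (1 + τ/2) := by
      have := le_trans hTε (min_le_right _ _); linarith
    calc Real.exp (T / 2) ≤ Real.exp (Real.log (1 + τ/2)) := Real.exp_le_exp.mpr h1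
      _ = 1 + τ/2 := Real.exp_log (by linarith)
  rcases hη.lt_or_gt with hneg | hpos
  · -- η < 0 : mirror
    obtain ⟨η0, z0, ηf, zf, h0, hz0, hne, hderiv, hsgnf, hηT, hzT, hbd, hzb⟩ :=
      main_pos hmsc hτ (neg_pos.mpr hneg) hz hT hT1 hTτ
    have hη0pos : 0 < η0 := by
      have h := hsgnf T ⟨hT.le, le_rfl⟩
      rw [hηT] at h
      nlinarith [neg_pos.mpr hneg]
    refine ⟨-η0, z0, fun t => -(ηf t), zf, by simp only; rw [h0], hz0, neg_ne_zero.mpr hne, ?_, ?_, ?_,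
      hzT, by rwa [abs_neg], hzb⟩
    · intro t ht
      obtain ⟨hd1, hd2⟩ := hderiv t ht
      refine ⟨?_, hd2⟩
      have hft : 0 < ηf t := by
        have := hsgnf t ht; nlinarith
      have hodd : (msc (zf t) (-(ηf t))).im = -(msc (zf t) (ηf t)).im :=
        msc_im_odd hmsc (zf t) hft
      have : HasDerivAt (fun t => -(ηf t)) _ t := hd1.neg
      convert this using 1
      rw [hodd]
      ring
    · intro t ht
      have := hsgnf t ht
      show 0 < -(ηf t) * -η0
      nlinarith
    · show -(ηf T) = η
      rw [hηT]; ring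
  · exact main_pos hmsc hτ hpos hz hT hT1 hTτ
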